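/- Let R be a valuation domain and ν an ideal valuation on R. For each integer n ≥ 1, the set P_n = {x ∈ R : ν(xR) < n} is a prime ideal of R, and P_1 ⊆ P_2 ⊆ P_3 ⊆ ⋯ is an ascending chain. Consequently, if R has finite Krull dimension d, then ν takes at most d + 1 distinct values on the nonzero ideals of R. -/

import Mathlib

/-- An ideal valuation on an integral domain `R`. -/
def IsIdealValuation (R : Type*) [CommRing R] (ν : Ideal R → ℕ∞) : Prop :=
  ν ⊥ = 0 ∧ ν ⊤ = ⊤ ∧
  (∀ I J : Ideal R, min (ν I) (ν J) ≤ ν (I * J)) ∧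
  (∀ I : Ideal R, ν I = ⨆ (J : Ideal R) (_ : J ≤ I) (_ : J.FG), ν J)

section Aux

variable {R : Type*} [CommRing R] [IsDomain R] [ValuationRing R] {ν : Ideal R → ℕ∞}

theorem IsIdealValuation.mono (hν : IsIdealValuation R ν) {I J : Ideal R} (h : J ≤ I) :
    ν J ≤ ν I := by
  rw [hν.2.2.2 J, hν.2.2.2 I]
  exact iSup_le fun K => iSup_le fun hK => iSup_le fun hfg =>
    le_iSup_of_le K (le_iSup_of_le (hK.trans h) (le_iSup_of_le hfg le_rfl))

/-- The ideal `P_n = {x : ν(xR) < n}` for `n ≥ 1`. -/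
def IVIdeal (hν : IsIdealValuation R ν) (n : ℕ) (hn : 1 ≤ n) : Ideal R where
  carrier := {x : R | ν (Ideal.span {x}) < (n : ℕ∞)}
  zero_mem' := by
    have : Ideal.span ({(0 : R)} : Set R) = ⊥ := Ideal.span_singleton_eq_bot.mpr rfl
    rw [Set.mem_setOf_eq, this, hν.1]
    exact_mod_cast Nat.lt_of_lt_of_le Nat.zero_lt_one hn
  add_mem' := by
    intro a b ha hb
    rcases ValuationRing.dvd_total a b with h | h
    · have hle : Ideal.span {a + b} ≤ Ideal.span {a} :=
        Ideal.span_singleton_le_span_singleton.mpr (dvd_add dvd_rfl h)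
      exact lt_of_le_of_lt (hν.mono hle) ha
    · have hle : Ideal.span {a + b} ≤ Ideal.span {b} :=
        Ideal.span_singleton_le_span_singleton.mpr (dvd_add h dvd_rfl)
      exact lt_of_le_of_lt (hν.mono hle) hb
  smul_mem' := by
    intro r x hx
    have hle : Ideal.span {r • x} ≤ Ideal.span {x} :=
      Ideal.span_singleton_le_span_singleton.mpr (by simpa [smul_eq_mul] using Dvd.intro_left r rfl)
    exact lt_of_le_of_lt (hν.mono hle) hx

theorem mem_IVIdeal (hν : IsIdealValuation R ν) (n : ℕ) (hn : 1 ≤ n) (x : R) :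
    x ∈ IVIdeal hν n hn ↔ ν (Ideal.span {x}) < (n : ℕ∞) := Iff.rfl

theorem IVIdeal_prime (hν : IsIdealValuation R ν) (n : ℕ) (hn : 1 ≤ n) :
    (IVIdeal hν n hn).IsPrime := by
  constructor
  · intro h
    have h1 : (1 : R) ∈ IVIdeal hν n hn := h ▸ Submodule.mem_top
    rw [mem_IVIdeal, Ideal.span_singleton_one, hν.2.1] at h1
    exact (not_top_lt h1)
  · intro x y hxy
    rw [mem_IVIdeal] at hxy
    rw [← Ideal.span_singleton_mul_span_singleton] at hxy
    have := lt_of_le_of_lt (hν.2.2.1 (Ideal.span {x}) (Ideal.span {y})) hxy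
    rcases min_cases (ν (Ideal.span {x})) (ν (Ideal.span {y})) with ⟨heq, _⟩ | ⟨heq, _⟩
    · exact Or.inl (by rw [mem_IVIdeal, ← heq]; exact this)
    · exact Or.inr (by rw [mem_IVIdeal, ← heq]; exact this)

theorem IsIdealValuation.exists_ne_zero_val_eq (hν : IsIdealValuation R ν) {I : Ideal R}
    (hI : I ≠ ⊥) (htop : ν I ≠ ⊤) :
    ∃ x : R, x ≠ 0 ∧ x ∈ I ∧ ν (Ideal.span {x}) = ν I := by
  obtain ⟨k, hk⟩ : ∃ k : ℕ, ν I = (k : ℕ∞) := by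
    lift ν I to ℕ using htop with k hk
    exact ⟨k, rfl⟩
  have h1 : ∃ J : Ideal R, J ≤ I ∧ J.FG ∧ ν J = ν I := by
    by_contra hcon
    push_neg at hcon
    have hlt : ∀ J : Ideal R, J ≤ I → J.FG → ν J < ν I := fun J hJ hfg =>
      lt_of_le_of_ne (hν.mono hJ) (hcon J hJ hfg)
    cases k with
    | zero =>
      refine hcon ⊥ bot_le Submodule.fg_bot ?_
      rw [hν.1, hk]; rfl
    | succ m =>
      have hle : ν I ≤ (m : ℕ∞) := by
        rw [hν.2.2.2 I]
        refine iSup_le fun J => iSup_le fun hJ => iSup_le fun hfg => ?_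
        have := hlt J hJ hfg
        rw [hk] at this
        rw [← ENat.lt_add_one_iff (by exact (ENat.coe_ne_top m))]
        exact_mod_cast this
      rw [hk] at hle
      exact absurd hle (by exact_mod_cast Nat.not_succ_le_self m)
  obtain ⟨J, hJle, hJfg, hJval⟩ := h1
  obtain ⟨x, rfl⟩ := (IsBezout.isPrincipal_of_FG J hJfg).1
  by_cases hx : x = 0
  · subst hx
    have h0 : ν I = 0 := by
      rw [← hJval]
      have : Submodule.span R ({(0 : R)} : Set R) = ⊥ := by simp
      rw [this, hν.1]
    obtain ⟨y, hyI, hy0⟩ := (Submodule.ne_bot_iff I).mp hI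
    refine ⟨y, hy0, hyI, ?_⟩
    rw [h0]
    have := hν.mono (show Ideal.span {y} ≤ I from Ideal.span_le.mpr (Set.singleton_subset_iff.mpr hyI))
    rw [h0] at this
    exact le_antisymm this zero_le
  · exact ⟨x, hx, hJle (Submodule.mem_span_singleton_self x), hJval⟩

/-- The chain of primes `⊥ = F 0 ⊆ P 1 ⊆ P 2 ⊆ ⋯` as points of the prime spectrum. -/
def IVF (hν : IsIdealValuation R ν) : ℕ → PrimeSpectrum R
  | 0 => ⟨⊥, Ideal.bot_prime⟩
  | (m + 1) => ⟨IVIdeal hν (m + 1) (Nat.succ_le_succ (Nat.zero_le m)),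
      IVIdeal_prime hν (m + 1) (Nat.succ_le_succ (Nat.zero_le m))⟩

theorem IVF_mono (hν : IsIdealValuation R ν) : Monotone (IVF hν) := by
  apply monotone_nat_of_le_succ
  intro n
  rw [← PrimeSpectrum.asIdeal_le_asIdeal]
  cases n with
  | zero => exact bot_le
  | succ m =>
    intro x hx
    rw [IVF, mem_IVIdeal] at hx ⊢
    exact lt_of_lt_of_le hx (by exact_mod_cast Nat.le_succ (m + 1))

theorem IVF_jump (hν : IsIdealValuation R ν) {n : ℕ}
    (hn : ∃ x : R, x ≠ 0 ∧ ν (Ideal.span {x}) = (n : ℕ∞)) {m : ℕ} (hm : m ≤ n) :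
    IVF hν m < IVF hν (n + 1) := by
  obtain ⟨x, hx0, hxv⟩ := hn
  have hxmem : x ∈ (IVF hν (n + 1)).asIdeal := by
    rw [IVF, mem_IVIdeal, hxv]
    exact_mod_cast Nat.lt_succ_self n
  have hxnot : x ∉ (IVF hν m).asIdeal := by
    cases m with
    | zero =>
      rw [IVF]
      simpa [Ideal.mem_bot] using hx0
    | succ k =>
      rw [IVF, mem_IVIdeal, hxv]
      exact not_lt.mpr (by exact_mod_cast hm)
  refine lt_of_le_of_ne (IVF_mono hν (Nat.le_succ_of_le hm)) fun h => hxnot ?_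
  rw [h]; exact hxmem

end Aux

theorem idealValuation_range_bounded_on_valuationRing
    (R : Type*) [CommRing R] [IsDomain R] [ValuationRing R]
    (ν : Ideal R → ℕ∞) (hν : IsIdealValuation R ν) :
    (∀ n : ℕ, 1 ≤ n → ∃ P : Ideal R, P.IsPrime ∧
        (P : Set R) = {x : R | ν (Ideal.span {x}) < (n : ℕ∞)}) ∧
    (∀ n : ℕ, {x : R | ν (Ideal.span {x}) < (n : ℕ∞)} ⊆
        {x : R | ν (Ideal.span {x}) < ((n + 1 : ℕ) : ℕ∞)}) ∧
    (∀ d : ℕ, ringKrullDim R = (d : WithBot ℕ∞) →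
        ∃ s : Finset ℕ∞, s.card ≤ d + 1 ∧ ∀ I : Ideal R, I ≠ ⊥ → ν I ∈ s) := by
  refine ⟨fun n hn => ⟨IVIdeal hν n hn, IVIdeal_prime hν n hn, rfl⟩,
    fun n x hx => ?_, fun d hd => ?_⟩
  · simp only [Set.mem_setOf_eq] at hx ⊢
    exact hx.trans_le (by exact_mod_cast Nat.le_succ n)
  set V : Set ℕ := {n : ℕ | ∃ x : R, x ≠ 0 ∧ ν (Ideal.span {x}) = (n : ℕ∞)} with hV
  -- every finite subset of `V` gives a chain of primes, hence has cardinality ≤ d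
  have hcard : ∀ T : Finset ℕ, ↑T ⊆ V → T.card ≤ d := by
    intro T hT
    set e := T.orderIsoOfFin rfl with he
    set g : Fin (T.card + 1) → PrimeSpectrum R :=
      fun i => IVF hν (Fin.cases 0 (fun j => (e j : ℕ) + 1) i) with hg
    have hsm : StrictMono g := by
      intro a b hab
      induction b using Fin.cases with
      | zero => exact absurd hab (Fin.not_lt_zero a)
      | succ j =>
        have hjV : ((e j : ℕ)) ∈ V := hT (e j).2
        induction a using Fin.cases with
        | zero =>
          simp only [hg, Fin.cases_zero, Fin.cases_succ]
          exact IVF_jump hν hjV (Nat.zero_le _)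
        | succ i =>
          have hij : i < j := by
            simpa using hab
          have hlt : (e i : ℕ) < (e j : ℕ) := by
            exact_mod_cast e.strictMono hij
          simp only [hg, Fin.cases_succ]
          exact IVF_jump hν hjV hlt
    have hlen : (T.card : WithBot ℕ∞) ≤ ringKrullDim R :=
      Order.LTSeries.length_le_krullDim (LTSeries.mk T.card g hsm)
    rw [hd] at hlen
    exact_mod_cast hlen
  have hVfin : V.Finite := by
    by_contra h
    obtain ⟨T, hTs, hTc⟩ := (show V.Infinite from h).exists_subset_card_eq (d + 1)
    have := hcard T hTs
    omega
  refine ⟨insert ⊤ (hVfin.toFinset.image ((↑·) : ℕ → ℕ∞)), ?_, ?_⟩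
  · calc (insert ⊤ (hVfin.toFinset.image ((↑·) : ℕ → ℕ∞))).card
        ≤ (hVfin.toFinset.image ((↑·) : ℕ → ℕ∞)).card + 1 := Finset.card_insert_le _ _
      _ ≤ hVfin.toFinset.card + 1 := by
          exact Nat.add_le_add_right (Finset.card_image_le) 1
      _ ≤ d + 1 := by
          refine Nat.add_le_add_right (hcard hVfin.toFinset ?_) 1
          rw [Set.Finite.coe_toFinset]
  · intro I hI
    by_cases hIt : ν I = ⊤
    · rw [hIt]; exact Finset.mem_insert_self _ _
    · obtain ⟨x, hx0, -, hxv⟩ := hν.exists_ne_zero_val_eq hI hIt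
      obtain ⟨k, hk⟩ : ∃ k : ℕ, ν I = (k : ℕ∞) := by
        lift ν I to ℕ using hIt with k hk
        exact ⟨k, rfl⟩
      refine Finset.mem_insert_of_mem (Finset.mem_image.mpr ⟨k, ?_, hk.symm⟩)
      rw [Set.Finite.mem_toFinset]
      exact ⟨x, hx0, hxv.trans hk⟩
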